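/- Let (X', Y') be a constrained alignment of X and Y with respect to P that has minimal alignment score among all constrained alignments of X and Y with respect to P under the distance function δ (δ(a,b) = -1 if a = b and 0 otherwise). Then the list M of matching-column characters of (X', Y') is a constrained longest common subsequence of X and Y with respect to P. -/

import Mathlib

/-- `Z` is a constrained common subsequence of `X` and `Y` with respect to `P`:
`Z` is a sublist (subsequence) of both `X` and `Y`, and `P` is a sublist of `Z`. -/
def CCS {α : Type*} (X Y P Z : List α) : Prop :=
  Z.Sublist X ∧ Z.Sublist Y ∧ P.Sublist Z

/-- `Z` is a constrained longest common subsequence of `X` and `Y` with respect to `P`. -/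
def CLCS {α : Type*} (X Y P Z : List α) : Prop :=
  CCS X Y P Z ∧ ∀ W : List α, CCS X Y P W → W.length ≤ Z.length

/-- The maximum length of a constrained common subsequence of `X` and `Y`
with respect to `P` (meaningful when some CCS exists). -/
noncomputable def clcsLen {α : Type*} (X Y P : List α) : ℕ :=
  sSup {n | ∃ Z : List α, CCS X Y P Z ∧ Z.length = n}

/-- `(X', Y')` is an alignment of `X` and `Y`: equal lengths, removing the spaces
(`none` entries) gives back `X` resp. `Y`, and no column consists of two spaces. -/
def IsAlignment {σ : Type*} (X Y : List σ) (X' Y' : List (Option σ)) : Prop :=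
  X'.length = Y'.length ∧
  X'.filterMap id = X ∧
  Y'.filterMap id = Y ∧
  ∀ p ∈ X'.zip Y', ¬(p.1 = none ∧ p.2 = none)

/-- The list of matching-column characters of an alignment. -/
def matchCols {σ : Type*} [DecidableEq σ] (X' Y' : List (Option σ)) : List σ :=
  (X'.zip Y').filterMap (fun p => if p.1 = p.2 then p.1 else none)

/-- `(X', Y')` is a constrained alignment of `X` and `Y` with respect to `P`. -/
def IsConstrainedAlignment {σ : Type*} [DecidableEq σ] (X Y P : List σ)
    (X' Y' : List (Option σ)) : Prop :=
  IsAlignment X Y X' Y' ∧ P.Sublist (matchCols X' Y')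

/-- The alignment score of `(X', Y')` under a distance function `δ`. -/
def score {σ : Type*} (δ : Option σ → Option σ → ℤ) (X' Y' : List (Option σ)) : ℤ :=
  ((X'.zip Y').map (fun p => δ p.1 p.2)).sum

/-- The distance function: `-1` on a match, `0` otherwise. -/
def delta {σ : Type*} [DecidableEq σ] (a b : Option σ) : ℤ :=
  if a = b then -1 else 0


lemma score_eq_aux {σ : Type*} [DecidableEq σ] :
    ∀ (L : List (Option σ × Option σ)),
    (∀ p ∈ L, ¬(p.1 = none ∧ p.2 = none)) →
    (L.map (fun p => delta p.1 p.2)).sum =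
      -((L.filterMap (fun p => if p.1 = p.2 then p.1 else none)).length : ℤ)
  | [], _ => by simp
  | (a, b) :: L, h => by
    have ih := score_eq_aux L (fun q hq => h q (List.mem_cons_of_mem _ hq))
    by_cases hp : a = b
    · subst hp
      rcases hq : a with _ | c
      · exact absurd ⟨hq, hq⟩ (h (a, a) List.mem_cons_self)
      · subst hq
        simp only [List.map_cons, List.filterMap_cons, List.sum_cons, if_pos rfl,
          List.length_cons]
        rw [show delta (some c) (some c) = -1 from if_pos rfl, ih]
        push_cast [List.length_cons]
        ring
    · simp only [List.map_cons, List.filterMap_cons, List.sum_cons, if_neg hp]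
      rw [show delta a b = 0 from if_neg hp, ih]
      ring

lemma filterMap_sublist_of_imp {α β : Type*} (f g : α → Option β)
    (h : ∀ x a, f x = some a → g x = some a) :
    ∀ l : List α, (l.filterMap f).Sublist (l.filterMap g)
  | [] => by simp
  | x :: l => by
    rcases hf : f x with _ | a
    · rcases hg : g x with _ | b
      · simpa [List.filterMap_cons, hf, hg] using filterMap_sublist_of_imp f g h l
      · simp only [List.filterMap_cons, hf, hg]
        exact (filterMap_sublist_of_imp f g h l).cons b
    · have hg := h x a hf
      simp only [List.filterMap_cons, hf, hg]
      exact (filterMap_sublist_of_imp f g h l).cons₂ a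

lemma matchCols_sublist_left {σ : Type*} [DecidableEq σ] (X' Y' : List (Option σ))
    (hl : X'.length = Y'.length) :
    (matchCols X' Y').Sublist (X'.filterMap id) := by
  have h1 : (matchCols X' Y').Sublist ((X'.zip Y').filterMap (fun p => p.1)) := by
    apply filterMap_sublist_of_imp
    intro p a hp
    by_cases hq : p.1 = p.2
    · simp [hq] at hp; rw [hq]; exact hp
    · simp [hq] at hp
  have h2 : X'.filterMap id = (X'.zip Y').filterMap (fun p => p.1) := by
    conv_lhs => rw [← List.map_fst_zip hl.le]
    rw [List.filterMap_map]; rfl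
  rw [h2]; exact h1

lemma matchCols_sublist_right {σ : Type*} [DecidableEq σ] (X' Y' : List (Option σ))
    (hl : X'.length = Y'.length) :
    (matchCols X' Y').Sublist (Y'.filterMap id) := by
  have h1 : (matchCols X' Y').Sublist ((X'.zip Y').filterMap (fun p => p.2)) := by
    apply filterMap_sublist_of_imp
    intro p a hp
    by_cases hq : p.1 = p.2
    · simp [hq] at hp; exact hp
    · simp [hq] at hp
  have h2 : Y'.filterMap id = (X'.zip Y').filterMap (fun p => p.2) := by
    conv_lhs => rw [← List.map_snd_zip hl.ge]
    rw [List.filterMap_map]; rfl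
  rw [h2]; exact h1

lemma matchCols_cons_left {σ : Type*} [DecidableEq σ] (x : σ) (A B : List (Option σ)) :
    matchCols (some x :: A) (none :: B) = matchCols A B := by
  simp [matchCols]

lemma matchCols_cons_right {σ : Type*} [DecidableEq σ] (y : σ) (A B : List (Option σ)) :
    matchCols (none :: A) (some y :: B) = matchCols A B := by
  simp [matchCols]

lemma matchCols_cons_match {σ : Type*} [DecidableEq σ] (x : σ) (A B : List (Option σ)) :
    matchCols (some x :: A) (some x :: B) = x :: matchCols A B := by
  simp [matchCols]

lemma alignment_nil {σ : Type*} [DecidableEq σ] (X Y : List σ) :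
    ∃ X'' Y'' : List (Option σ), IsAlignment X Y X'' Y'' ∧ matchCols X'' Y'' = [] := by
  refine ⟨X.map some ++ Y.map (fun _ => none), X.map (fun _ => none) ++ Y.map some,
    ⟨by simp, by simp [List.filterMap_append, List.filterMap_map, Function.comp],
     by simp [List.filterMap_append, List.filterMap_map, Function.comp], ?_⟩, ?_⟩
  · intro p hp
    rw [List.zip_append (by simp)] at hp
    rcases List.mem_append.1 hp with hp | hp
    · rw [List.zip_map'] at hp
      obtain ⟨c, _, hc⟩ := List.mem_map.1 hp
      simp [← hc]
    · rw [List.zip_map'] at hp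
      obtain ⟨c, _, hc⟩ := List.mem_map.1 hp
      simp [← hc]
  · rw [matchCols, List.zip_append (by simp), List.zip_map', List.zip_map']
    simp [List.filterMap_append, List.filterMap_map]

lemma exists_alignment {σ : Type*} [DecidableEq σ] :
    ∀ (X Y W : List σ), W.Sublist X → W.Sublist Y →
      ∃ X'' Y'' : List (Option σ), IsAlignment X Y X'' Y'' ∧ matchCols X'' Y'' = W := by
  intro X
  induction X with
  | nil =>
    intro Y W hX _
    rw [List.sublist_nil] at hX; subst hX
    exact alignment_nil _ _
  | cons x Xt ih =>
    intro Y
    induction Y with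
    | nil =>
      intro W _ hY
      rw [List.sublist_nil] at hY; subst hY
      exact alignment_nil _ _
    | cons y Yt ihY =>
      intro W hX hY
      match W, hX, hY with
      | [], _, _ => exact alignment_nil _ _
      | w :: Wt, hX, hY =>
        cases hX with
        | cons _ hX' =>
          obtain ⟨A, B, ⟨h1, h2, h3, h4⟩, hM⟩ := ih (y :: Yt) (w :: Wt) hX' hY
          refine ⟨some x :: A, none :: B,
            ⟨by simp [h1], by simp [h2]; exact h2, by simpa using h3, ?_⟩, ?_⟩
          · intro p hp
            rcases List.mem_cons.1 (by simpa [List.zip_cons_cons] using hp) with hp | hp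
            · simp [hp]
            · exact h4 p hp
          · rw [matchCols_cons_left]; exact hM
        | cons_cons _ hX' =>
          cases hY with
          | cons _ hY' =>
            obtain ⟨A, B, ⟨h1, h2, h3, h4⟩, hM⟩ := ihY (x :: Wt) (hX'.cons₂ x) hY'
            refine ⟨none :: A, some y :: B,
              ⟨by simp [h1], by simpa using h2, by simp [h3]; exact h3, ?_⟩, ?_⟩
            · intro p hp
              rcases List.mem_cons.1 (by simpa [List.zip_cons_cons] using hp) with hp | hp
              · simp [hp]
              · exact h4 p hp
            · rw [matchCols_cons_right]; exact hM
          | cons_cons _ hY' =>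
            obtain ⟨A, B, ⟨h1, h2, h3, h4⟩, hM⟩ := ih Yt Wt hX' hY'
            refine ⟨some x :: A, some x :: B,
              ⟨by simp [h1], by simp [h2]; exact h2, by simp [h3]; exact h3, ?_⟩, ?_⟩
            · intro p hp
              rcases List.mem_cons.1 (by simpa [List.zip_cons_cons] using hp) with hp | hp
              · simp [hp]
              · exact h4 p hp
            · rw [matchCols_cons_match, hM]

theorem min_alignment_matchCols_is_clcs {σ : Type*} [DecidableEq σ]
    (X Y P : List σ) (X' Y' : List (Option σ))
    (h : IsConstrainedAlignment X Y P X' Y')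
    (hmin : ∀ X'' Y'' : List (Option σ), IsConstrainedAlignment X Y P X'' Y'' →
      score delta X' Y' ≤ score delta X'' Y'') :
    CLCS X Y P (matchCols X' Y') := by
  obtain ⟨⟨hlen, hfX, hfY, hnn⟩, hP⟩ := h
  refine ⟨⟨hfX ▸ matchCols_sublist_left X' Y' hlen,
    hfY ▸ matchCols_sublist_right X' Y' hlen, hP⟩, ?_⟩
  intro W hW
  obtain ⟨hWX, hWY, hPW⟩ := hW
  obtain ⟨A, B, hAB, hM⟩ := exists_alignment X Y W hWX hWY
  have h1 := hmin A B ⟨hAB, hM ▸ hPW⟩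
  have e1 : score delta X' Y' = -((matchCols X' Y').length : ℤ) := score_eq_aux _ hnn
  have e2 : score delta A B = -((matchCols A B).length : ℤ) := score_eq_aux _ hAB.2.2.2
  rw [e1, e2, hM] at h1
  exact_mod_cast neg_le_neg_iff.mp h1
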